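/- (Weak Nullstellensatz over ℍ, one variable) For a left ideal I of ℍ[x], the zero locus 𝓥(I) = { a ∈ ℍ : F(a) = 0 for all F ∈ I } is empty if and only if I = ℍ[x]. -/

import Mathlib

open Polynomial

noncomputable section
local notation "ℍ" => Quaternion ℝ

-- ===== qconj machinery (already verified) =====
def qconj (p : ℍ[X]) : ℍ[X] := ⟨AddMonoidAlgebra.ofCoeff (p.toFinsupp.coeff.mapRange star (star_zero _))⟩

@[simp] lemma coeff_qconj (p : ℍ[X]) (n : ℕ) : (qconj p).coeff n = star (p.coeff n) := rfl

lemma qconj_qconj (p : ℍ[X]) : qconj (qconj p) = p := Polynomial.ext fun n => by simp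

lemma qconj_add (p q : ℍ[X]) : qconj (p + q) = qconj p + qconj q := Polynomial.ext fun n => by simp

lemma qconj_mul (p q : ℍ[X]) : qconj (p * q) = qconj q * qconj p := by
  refine Polynomial.ext fun n => ?_
  simp only [coeff_qconj, coeff_mul, star_sum, star_mul]
  rw [← Finset.Nat.sum_antidiagonal_swap]
  simp

lemma qconj_eq_zero {p : ℍ[X]} : qconj p = 0 ↔ p = 0 := by
  constructor
  · intro h; rw [← qconj_qconj p, h]; exact Polynomial.ext fun n => by simp
  · rintro rfl; exact Polynomial.ext fun n => by simp

lemma degree_qconj_le (p : ℍ[X]) : (qconj p).degree ≤ p.degree := by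
  refine (degree_le_iff_coeff_zero _ _).2 fun m hm => ?_
  rw [coeff_qconj, coeff_eq_zero_of_degree_lt hm, star_zero]

lemma degree_qconj (p : ℍ[X]) : (qconj p).degree = p.degree :=
  le_antisymm (degree_qconj_le p) (by simpa [qconj_qconj] using degree_qconj_le (qconj p))

lemma natDegree_qconj (p : ℍ[X]) : (qconj p).natDegree = p.natDegree := by
  simp [natDegree, degree_qconj]

lemma monic_qconj {p : ℍ[X]} (hp : p.Monic) : (qconj p).Monic := by
  have : (qconj p).coeff (qconj p).natDegree = 1 := by
    rw [natDegree_qconj, coeff_qconj, hp.coeff_natDegree, star_one]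
  exact this

lemma exists_right_div (p : ℍ[X]) {g : ℍ[X]} (hg : g.Monic) :
    ∃ h r : ℍ[X], p = h * g + r ∧ r.degree < g.degree := by
  refine ⟨qconj (qconj p /ₘ qconj g), qconj (qconj p %ₘ qconj g), ?_, ?_⟩
  · conv_lhs => rw [← qconj_qconj p, ← modByMonic_add_div (qconj p) (qconj g)]
    rw [qconj_add, qconj_mul, qconj_qconj, add_comm]
  · rw [degree_qconj, ← degree_qconj g]
    exact degree_modByMonic_lt _ (monic_qconj hg)

-- ===== eval lemmas =====
lemma eval_mul_eq_zero_of_right (p q : ℍ[X]) (a : ℍ) (hq : q.eval a = 0) :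
    (p * q).eval a = 0 := by
  induction p using Polynomial.induction_on' with
  | add f g hf hg => rw [add_mul, eval_add, hf, hg, add_zero]
  | monomial i c =>
      rw [← C_mul_X_pow_eq_monomial, mul_assoc, X_pow_mul, eval_C_mul, eval_mul_X_pow, hq,
        zero_mul, mul_zero]

lemma commute_C (c : ℍ) (q : ℍ[X]) (h : ∀ n, Commute c (q.coeff n)) : Commute (C c) q := by
  refine Polynomial.ext fun n => ?_
  rw [coeff_C_mul, coeff_mul_C, (h n).eq]

lemma commute_real_map (p : ℝ[X]) (q : ℍ[X]) :
    Commute (p.map (algebraMap ℝ ℍ)) q := by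
  induction p using Polynomial.induction_on' with
  | add f g hf hg => rw [Polynomial.map_add]; exact hf.add_left hg
  | monomial i c =>
      rw [map_monomial, ← C_mul_X_pow_eq_monomial]
      exact (commute_C _ _ fun n => Quaternion.coe_commute c _).mul_left
        ((commute_X q).pow_left i)

lemma eval_mul_real (p q : ℍ[X]) (x : ℝ) :
    (p * q).eval (x : ℍ) = p.eval (x : ℍ) * q.eval (x : ℍ) := by
  have := Polynomial.eval₂_mul_noncomm (RingHom.id ℍ) (x : ℍ)
    (p := p) (q := q) (fun k => (Quaternion.coe_commute x _).symm)
  exact this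

lemma qconj_eval_real (p : ℍ[X]) (x : ℝ) :
    (qconj p).eval (x : ℍ) = star (p.eval (x : ℍ)) := by
  induction p using Polynomial.induction_on' with
  | add f g hf hg =>
      rw [qconj_add, eval_add, hf, hg, eval_add, star_add]
  | monomial i c =>
      have : qconj (monomial i c) = monomial i (star c) := Polynomial.ext fun n => by
        simp [coeff_monomial]; split <;> simp
      rw [this, eval_monomial, eval_monomial, star_mul, ← Quaternion.coe_pow,
        Quaternion.star_coe, Quaternion.coe_mul_eq_smul, Quaternion.mul_coe_eq_smul]

def rePoly (p : ℍ[X]) : ℝ[X] := ⟨AddMonoidAlgebra.ofCoeff (p.toFinsupp.coeff.mapRange (fun q : ℍ => q.re) rfl)⟩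

@[simp] lemma coeff_rePoly (p : ℍ[X]) (n : ℕ) : (rePoly p).coeff n = (p.coeff n).re := rfl

lemma rePoly_map (p : ℍ[X]) (h : ∀ n, star (p.coeff n) = p.coeff n) :
    (rePoly p).map (algebraMap ℝ ℍ) = p := by
  refine Polynomial.ext fun n => ?_
  rw [coeff_map, coeff_rePoly, Quaternion.algebraMap_def]
  exact (Quaternion.star_eq_self.mp (h n)).symm

lemma star_coeff_mul_qconj (p : ℍ[X]) (n : ℕ) :
    star ((p * qconj p).coeff n) = (p * qconj p).coeff n := by
  rw [coeff_mul, star_sum, ← Finset.Nat.sum_antidiagonal_swap]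
  refine Finset.sum_congr rfl fun ij hij => ?_
  simp

lemma degree_le_one_of_lt_two {R : Type*} [Semiring R] {p : R[X]} (h : p.degree < 2) :
    p.degree ≤ 1 := by
  by_cases h0 : p = 0
  · simp [h0]
  · rw [degree_eq_natDegree h0] at h ⊢
    have h2 : p.natDegree < 2 := by exact_mod_cast h
    exact_mod_cast Nat.lt_succ_iff.mp h2

-- ===== Niven's theorem =====
theorem niven_quat (f : ℍ[X]) (hf : 0 < f.degree) : ∃ a : ℍ, f.eval a = 0 := by
  classical
  have hf0 : f ≠ 0 := fun h => by simp [h] at hf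
  set N : ℍ[X] := f * qconj f with hN
  have hNmap : (rePoly N).map (algebraMap ℝ ℍ) = N := rePoly_map _ (star_coeff_mul_qconj f)
  set P : ℝ[X] := rePoly N with hP
  have hdegN : N.degree = f.degree + f.degree := by
    rw [hN, degree_mul, degree_qconj]
  have hdegP : P.degree = N.degree := by
    rw [← hNmap, degree_map_eq_of_injective (Quaternion.algebraMap_injective)]
  have hfnd : 0 < f.natDegree := natDegree_pos_iff_degree_pos.mpr hf
  have hdegPpos : 0 < P.degree := by
    rw [hdegP, hdegN, degree_eq_natDegree hf0, ← Nat.cast_add]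
    exact_mod_cast Nat.add_pos_left hfnd _
  -- complex root of P
  have hdegPC : 0 < (P.map (algebraMap ℝ ℂ)).degree := by
    rwa [degree_map_eq_of_injective (algebraMap ℝ ℂ).injective]
  obtain ⟨z, hz⟩ := Complex.exists_root hdegPC
  by_cases hzim : z.im = 0
  · -- real root
    have hzre : z = ((z.re : ℝ) : ℂ) := Complex.ext rfl (by simp [hzim])
    have hPz : P.eval z.re = 0 := by
      have := hz
      rw [IsRoot, hzre, eval_map,
        show ((z.re : ℝ) : ℂ) = algebraMap ℝ ℂ z.re from rfl,
        Polynomial.eval₂_at_apply] at this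
      exact_mod_cast (Complex.ofReal_eq_zero).mp this
    have hNz : N.eval ((z.re : ℝ) : ℍ) = 0 := by
      rw [← hNmap, ← Quaternion.algebraMap_def, eval_map, Polynomial.eval₂_at_apply, hPz,
        map_zero]
    rw [hN, eval_mul_real] at hNz
    rcases mul_eq_zero.mp hNz with h | h
    · exact ⟨_, h⟩
    · refine ⟨((z.re : ℝ) : ℍ), ?_⟩
      have := qconj_eval_real f z.re
      rw [h] at this
      exact star_eq_zero.mp this.symm
  · -- nonreal root
    set t : ℝ := 2 * z.re with ht
    set nn : ℝ := Complex.normSq z with hnn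
    set c : ℝ[X] := X ^ 2 - C t * X + C nn with hc
    have hcsub : c = X ^ 2 - (C t * X - C nn) := by ring
    have hlt2 : (C t * X - C nn).degree < 2 :=
      (degree_sub_le _ _).trans_lt (max_lt (degree_C_mul_X_le t |>.trans_lt (by norm_num))
        (degree_C_le.trans_lt (by norm_num)))
    have hcmonic : c.Monic := by rw [hcsub]; exact monic_X_pow_sub hlt2
    have hdegc : c.degree = 2 := by
      have hq : c = C 1 * X ^ 2 + C (-t) * X + C nn := by simp; ring
      rw [hq]; exact degree_quadratic one_ne_zero
    -- step 1 : c ∣ P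
    have hPdecomp : P %ₘ c + c * (P /ₘ c) = P := modByMonic_add_div P c
    set r0 : ℝ[X] := P %ₘ c with hr0def
    have hdegr0 : r0.degree < 2 := hdegc ▸ degree_modByMonic_lt P hcmonic
    have hr0eq : r0 = C (r0.coeff 1) * X + C (r0.coeff 0) :=
      eq_X_add_C_of_degree_le_one (degree_le_one_of_lt_two hdegr0)
    have hcz : (c.map (algebraMap ℝ ℂ)).eval z = 0 := by
      have h1 : z * (starRingEnd ℂ) z = (nn : ℂ) := by
        rw [Complex.mul_conj]
      have h2 : z + (starRingEnd ℂ) z = (t : ℂ) := by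
        rw [Complex.add_conj, ht]
        try push_cast
        try ring
      simp only [hc, Polynomial.map_add, Polynomial.map_sub, Polynomial.map_pow,
        Polynomial.map_mul, map_X, map_C, eval_add, eval_sub, eval_pow, eval_mul, eval_X, eval_C]
      rw [show (algebraMap ℝ ℂ) t = (t : ℂ) from rfl, show (algebraMap ℝ ℂ) nn = (nn : ℂ) from rfl,
        ← h1, ← h2]; ring
    have hr0z : ((r0.map (algebraMap ℝ ℂ))).eval z = 0 := by
      have hthis : (P.map (algebraMap ℝ ℂ)).eval z = 0 := hz
      rw [← hPdecomp, Polynomial.map_add, Polynomial.map_mul, eval_add, eval_mul, hcz, zero_mul,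
        add_zero] at hthis
      exact hthis
    have hc1 : r0.coeff 1 = 0 := by
      rw [hr0eq] at hr0z
      simp only [Polynomial.map_add, Polynomial.map_mul, map_C, map_X, eval_add, eval_mul,
        eval_C, eval_X] at hr0z
      have h1 : (r0.coeff 1) * z.im = 0 := by
        have := congrArg Complex.im hr0z; simpa using this
      rcases mul_eq_zero.mp h1 with h | h
      · exact h
      · exact absurd h hzim
    have hc0 : r0.coeff 0 = 0 := by
      rw [hr0eq] at hr0z
      simp only [Polynomial.map_add, Polynomial.map_mul, map_C, map_X, eval_add, eval_mul,
        eval_C, eval_X, hc1] at hr0z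
      simpa using hr0z
    have hr00 : r0 = 0 := by rw [hr0eq, hc1, hc0]; simp
    have hcdvdP : c ∣ P := ⟨P /ₘ c, by conv_lhs => rw [← hPdecomp, hr00, zero_add]⟩
    -- step 2: push to ℍ
    set Cc : ℍ[X] := c.map (algebraMap ℝ ℍ) with hCcdef
    have hCcmonic : Cc.Monic := hcmonic.map _
    have hdegCc : Cc.degree = 2 := by
      rw [hCcdef, degree_map_eq_of_injective (Quaternion.algebraMap_injective), hdegc]
    have hCceq : Cc = X ^ 2 - C ((t : ℝ) : ℍ) * X + C ((nn : ℝ) : ℍ) := by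
      rw [hCcdef, hc]
      simp [Polynomial.map_add, Polynomial.map_sub, Polynomial.map_pow, Polynomial.map_mul,
        Quaternion.algebraMap_def]
    have hCcdvdN : Cc ∣ N := by
      obtain ⟨k, hk⟩ := hcdvdP
      exact ⟨k.map (algebraMap ℝ ℍ), by rw [← hNmap, hk, Polynomial.map_mul]⟩
    obtain ⟨h, r, hfdec, hdegr⟩ := exists_right_div f hCcmonic
    rw [hdegCc] at hdegr
    -- N = Cc * s + r * qconj r
    have hqCc : qconj Cc = Cc := Polynomial.ext fun n => by
      simp [hCcdef, coeff_map, Quaternion.algebraMap_def]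
    have e1 : ∀ a b : ℍ[X], a * Cc * b = Cc * (a * b) := fun a b => by
      rw [← (commute_real_map c a).eq, mul_assoc]
    have hexp : ∀ A B C D : ℍ[X],
        (A * Cc + B) * (Cc * C + D) =
          Cc * (A * (Cc * C)) + Cc * (A * D) + (Cc * (B * C) + B * D) := by
      intro A B C D
      rw [add_mul, mul_add, mul_add, e1, e1, ← mul_assoc B Cc C, e1]
    have hNdec : N = Cc * (h * (Cc * qconj h)) + Cc * (h * qconj r) +
        (Cc * (r * qconj h) + r * qconj r) := by
      rw [hN, hfdec, qconj_add, qconj_mul, hqCc, hexp]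
    have hwsub : r * qconj r =
        N - Cc * (h * (Cc * qconj h)) - Cc * (h * qconj r) - Cc * (r * qconj h) := by
      rw [hNdec]; abel
    have hCcdvdw : Cc ∣ r * qconj r := by
      rw [hwsub]
      exact dvd_sub (dvd_sub (dvd_sub hCcdvdN ⟨_, rfl⟩) ⟨_, rfl⟩) ⟨_, rfl⟩
    -- find the root u
    by_cases hrz : r = 0
    · -- f = h * Cc, root comes from z itself
      set u : ℍ := ⟨z.re, z.im, 0, 0⟩ with hu
      have hu1 : u + star u = ((t : ℝ) : ℍ) := by
        rw [Quaternion.self_add_star']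
      have hu2 : star u * u = ((nn : ℝ) : ℍ) := by
        rw [Quaternion.star_mul_self]
        congr 1
        simp only [Quaternion.normSq_def', hu, Complex.normSq_apply, hnn]
        exact (Quaternion.normSq_def' (⟨z.re, z.im, 0, 0⟩ : ℍ)).trans (by ring)
      have hCceval : Cc.eval u = 0 := by
        have hX2 : ((X : ℍ[X]) ^ 2).eval u = u ^ 2 := by
          rw [← one_mul ((X : ℍ[X]) ^ 2), ← C_1, C_mul_X_pow_eq_monomial, eval_monomial, one_mul]
        rw [hCceq, eval_add, eval_sub, hX2, eval_C_mul, eval_X, eval_C, ← hu1, ← hu2]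
        noncomm_ring
      refine ⟨u, ?_⟩
      rw [hfdec, hrz, add_zero]
      exact eval_mul_eq_zero_of_right _ _ _ hCceval
    · -- r ≠ 0 : root of the linear remainder
      set α : ℍ := r.coeff 1 with hα
      set β : ℍ := r.coeff 0 with hβ
      have hrXC : r = C α * X + C β :=
        eq_X_add_C_of_degree_le_one (degree_le_one_of_lt_two hdegr)
      obtain ⟨k, hk⟩ := hCcdvdw
      have hwne : r * qconj r ≠ 0 := mul_ne_zero hrz (fun hq => hrz (qconj_eq_zero.mp hq))
      have hkne : k ≠ 0 := fun hq => hwne (by rw [hk, hq, mul_zero])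
      have hCcne : Cc ≠ 0 := hCcmonic.ne_zero
      have hndCc : Cc.natDegree = 2 := natDegree_eq_of_degree_eq_some hdegCc
      have hndr : r.natDegree ≤ 1 :=
        natDegree_le_iff_degree_le.mpr (degree_le_one_of_lt_two hdegr)
      have hndw : (r * qconj r).natDegree ≤ 2 := by
        rw [natDegree_mul hrz (fun hq => hrz (qconj_eq_zero.mp hq)), natDegree_qconj]
        omega
      have hndk : k.natDegree = 0 := by
        have := natDegree_mul hCcne hkne
        rw [← hk, hndCc] at this
        omega
      have hkC : k = C (k.coeff 0) := eq_C_of_natDegree_le_zero (le_of_eq hndk)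
      set κ : ℍ := k.coeff 0 with hκ
      rw [hkC] at hk
      -- coefficient equations
      have hr2 : r.coeff 2 = 0 :=
        coeff_eq_zero_of_degree_lt (lt_of_le_of_lt (degree_le_one_of_lt_two hdegr) (by norm_num))
      have hCc2 : Cc.coeff 2 = 1 := hndCc ▸ hCcmonic.coeff_natDegree
      have hCc1 : Cc.coeff 1 = -((t : ℝ) : ℍ) := by
        rw [hCceq]; simp [coeff_X_pow]
      have hCc0 : Cc.coeff 0 = ((nn : ℝ) : ℍ) := by
        rw [hCceq]; simp [coeff_X_pow]
      have hcoeff : ∀ n, (r * qconj r).coeff n = Cc.coeff n * κ := fun n => by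
        rw [hk, coeff_mul_C]
      have E2 : α * star α = κ := by
        have := hcoeff 2
        rw [coeff_mul, Finset.Nat.sum_antidiagonal_eq_sum_range_succ_mk] at this
        simpa [Finset.sum_range_succ, hr2, hCc2, ← hα, ← hβ] using this
      have E1 : β * star α + α * star β = -((t : ℝ) : ℍ) * κ := by
        have := hcoeff 1
        rw [coeff_mul, Finset.Nat.sum_antidiagonal_eq_sum_range_succ_mk] at this
        simpa [Finset.sum_range_succ, hCc1, ← hα, ← hβ] using this
      have E0 : β * star β = ((nn : ℝ) : ℍ) * κ := by
        have := hcoeff 0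
        rw [coeff_mul, Finset.Nat.sum_antidiagonal_eq_sum_range_succ_mk] at this
        simpa [Finset.sum_range_succ, hCc0, ← hα, ← hβ] using this
      have hαne : α ≠ 0 := by
        intro h0
        apply hkne
        rw [hkC]
        rw [h0, zero_mul] at E2
        rw [← E2, map_zero]
      set u : ℍ := -(α⁻¹ * β) with hu
      have hαu : α * u = -β := by
        rw [hu, mul_neg, ← mul_assoc, mul_inv_cancel₀ hαne, one_mul]
      have hu1 : u + star u = ((t : ℝ) : ℍ) := by
        have hsα : star α ≠ 0 := star_ne_zero.mpr hαne
        apply mul_left_cancel₀ hαne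
        apply mul_right_cancel₀ hsα
        calc α * (u + star u) * star α
            = α * u * star α + α * (star u * star α) := by noncomm_ring
          _ = -(β * star α) + -(α * star β) := by
              rw [← star_mul, hαu, star_neg, mul_neg, neg_mul]
          _ = -(β * star α + α * star β) := by rw [neg_add]
          _ = ((t : ℝ) : ℍ) * κ := by rw [E1, neg_mul, neg_neg]
          _ = ((t : ℝ) : ℍ) * (α * star α) := by rw [E2]
          _ = α * ((t : ℝ) : ℍ) * star α := by
              rw [← mul_assoc, (Quaternion.coe_commute (t : ℝ) α).eq]
      have hnsβ : Quaternion.normSq β = nn * Quaternion.normSq α := by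
        have h1 : ((Quaternion.normSq β : ℝ) : ℍ) = ((nn * Quaternion.normSq α : ℝ) : ℍ) := by
          rw [← Quaternion.self_mul_star, E0, ← E2, Quaternion.self_mul_star,
            ← Quaternion.coe_mul]
        exact Quaternion.coe_injective h1
      have hu2 : star u * u = ((nn : ℝ) : ℍ) := by
        rw [Quaternion.star_mul_self]
        congr 1
        rw [hu, Quaternion.normSq_neg, map_mul, map_inv₀, hnsβ]
        field_simp [Quaternion.normSq_ne_zero.mpr hαne]
        try ring
      have hCceval : Cc.eval u = 0 := by
        have hX2 : ((X : ℍ[X]) ^ 2).eval u = u ^ 2 := by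
          rw [← one_mul ((X : ℍ[X]) ^ 2), ← C_1, C_mul_X_pow_eq_monomial, eval_monomial, one_mul]
        rw [hCceq, eval_add, eval_sub, hX2, eval_C_mul, eval_X, eval_C, ← hu1, ← hu2]
        noncomm_ring
      refine ⟨u, ?_⟩
      rw [hfdec, eval_add, eval_mul_eq_zero_of_right _ _ _ hCceval, zero_add, hrXC, eval_add,
        eval_C_mul, eval_X, eval_C, hαu, neg_add_cancel]

lemma degree_C_mul_le' (a : ℍ) (p : ℍ[X]) : (C a * p).degree ≤ p.degree :=
  (degree_le_iff_coeff_zero _ _).2 fun m hm => by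
    rw [coeff_C_mul, coeff_eq_zero_of_degree_lt hm, mul_zero]

theorem weak_nullstellensatz_quaternions_aux (I : Ideal (Polynomial (Quaternion ℝ))) :
    {a : Quaternion ℝ | ∀ F ∈ I, F.eval a = 0} = ∅ ↔ I = ⊤ := by
  constructor
  · intro hemp
    by_contra hne
    suffices hnonempty : {a : Quaternion ℝ | ∀ F ∈ I, F.eval a = 0}.Nonempty by
      rw [hemp] at hnonempty; exact Set.not_nonempty_empty hnonempty
    by_cases hzero : ∀ F ∈ I, F = (0 : ℍ[X])
    · exact ⟨0, fun F hF => by rw [hzero F hF]; simp⟩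
    · push_neg at hzero
      obtain ⟨g₀, hg₀I, hg₀⟩ := hzero
      classical
      have hex : ∃ n, ∃ g ∈ I, g ≠ 0 ∧ g.natDegree = n := ⟨g₀.natDegree, g₀, hg₀I, hg₀, rfl⟩
      obtain ⟨g, hgI, hgne, hgdeg⟩ := Nat.find_spec hex
      have hlc : g.leadingCoeff ≠ 0 := leadingCoeff_ne_zero.mpr hgne
      set g' : ℍ[X] := C g.leadingCoeff⁻¹ * g with hg'def
      have hg'I : g' ∈ I := I.mul_mem_left _ hgI
      have hgg' : g = C g.leadingCoeff * g' := by
        rw [hg'def, ← mul_assoc, ← C_mul, mul_inv_cancel₀ hlc, C_1, one_mul]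
      have hdeg' : g'.degree = g.degree := by
        refine le_antisymm (degree_C_mul_le' _ _) ?_
        conv_lhs => rw [hgg']
        exact degree_C_mul_le' _ _
      have hnd' : g'.natDegree = g.natDegree := natDegree_eq_of_degree_eq hdeg'
      have hg'monic : g'.Monic := by
        have : g'.coeff g'.natDegree = 1 := by
          rw [hnd', hg'def, coeff_C_mul, ← leadingCoeff, inv_mul_cancel₀ hlc]
        exact this
      have hfactor : ∀ F ∈ I, ∃ h : ℍ[X], F = h * g' := by
        intro F hF
        obtain ⟨h, r, hFd, hdr⟩ := exists_right_div F hg'monic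
        have hrI : r ∈ I := by
          have hr : r = F - h * g' := by rw [hFd, add_sub_cancel_left]
          rw [hr]
          exact Submodule.sub_mem I hF (I.mul_mem_left h hg'I)
        have hr0 : r = 0 := by
          by_contra hr0
          have hlt : r.natDegree < Nat.find hex := by
            rw [← hgdeg]
            exact natDegree_lt_natDegree hr0 (hdr.trans_le (le_of_eq hdeg'))
          exact Nat.find_min hex hlt ⟨r, hrI, hr0, rfl⟩
        exact ⟨h, by rw [hFd, hr0, add_zero]⟩
      have hdegpos : 0 < g'.degree := by
        rcases Nat.eq_zero_or_pos g'.natDegree with h0 | hpos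
        · exfalso
          apply hne
          rw [Ideal.eq_top_iff_one]
          have : g' = 1 := hg'monic.natDegree_eq_zero.mp h0
          rwa [← this]
        · exact natDegree_pos_iff_degree_pos.mp hpos
      obtain ⟨a, ha⟩ := niven_quat g' hdegpos
      refine ⟨a, fun F hF => ?_⟩
      obtain ⟨h, rfl⟩ := hfactor F hF
      exact eval_mul_eq_zero_of_right _ _ _ ha
  · intro h
    subst h
    refine Set.eq_empty_iff_forall_notMem.mpr fun a ha => ?_
    have := ha 1 Submodule.mem_top
    rw [eval_one] at this
    exact one_ne_zero this

end

theorem weak_nullstellensatz_quaternions (I : Ideal (Polynomial (Quaternion ℝ))) :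
    {a : Quaternion ℝ | ∀ F ∈ I, F.eval a = 0} = ∅ ↔ I = ⊤ :=
  weak_nullstellensatz_quaternions_aux I
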